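/- For any set S ⊆ [n], the number of sets T ⊆ [n] with T ≠ S such that T ⊆ S or S ⊆ T equals 2^|S| + 2^(n−|S|) − 2; moreover, for every S ⊆ [n] one has 2^|S| + 2^(n−|S|) − 2 ≥ 2^⌈n/2⌉ + 2^⌊n/2⌋ − 2, with equality when |S| = ⌈n/2⌉. Consequently F(n,1) = 2^n − 2^⌈n/2⌉ − 2^⌊n/2⌋ + 1. -/

import Mathlib

open Finset in


lemma comparable_count (n : ℕ) (S : Finset ℕ) (hS : S ⊆ Finset.Icc 1 n) :
    ((Finset.Icc 1 n).powerset.filter (fun T => T ⊆ S ∨ S ⊆ T)).card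
      = 2 ^ S.card + 2 ^ (n - S.card) - 1 := by
  have hcard : (Finset.Icc 1 n).card = n := by simp
  have hSn : S.card ≤ n := hcard ▸ Finset.card_le_card hS
  rw [Finset.filter_or]
  have h1 : (Finset.Icc 1 n).powerset.filter (fun T => T ⊆ S) = S.powerset := by
    ext T; simp only [mem_filter, mem_powerset]
    exact ⟨fun h => h.2, fun h => ⟨h.trans hS, h⟩⟩
  have h2 : (Finset.Icc 1 n).powerset.filter (fun T => S ⊆ T)
      = ((Finset.Icc 1 n) \ S).powerset.image (fun A => S ∪ A) := by
    ext T
    simp only [mem_filter, mem_powerset, mem_image]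
    constructor
    · rintro ⟨hT, hST⟩
      refine ⟨T \ S, fun x hx => ?_, ?_⟩
      · simp only [mem_sdiff] at hx ⊢
        exact ⟨hT hx.1, hx.2⟩
      · exact Finset.union_sdiff_of_subset hST
    · rintro ⟨A, hA, rfl⟩
      refine ⟨Finset.union_subset hS (hA.trans (Finset.sdiff_subset)), Finset.subset_union_left⟩
  have hinter : S.powerset ∩ ((Finset.Icc 1 n) \ S).powerset.image (fun A => S ∪ A) = {S} := by
    ext T
    simp only [mem_inter, mem_powerset, mem_image, mem_singleton]
    constructor
    · rintro ⟨hTS, A, hA, rfl⟩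
      have : A ⊆ S := Finset.union_subset_iff.mp hTS |>.2
      have hAe : A = ∅ := by
        rw [Finset.eq_empty_iff_forall_notMem]
        intro x hx
        exact (Finset.mem_sdiff.mp (hA hx)).2 (this hx)
      simp [hAe]
    · rintro rfl
      exact ⟨Finset.Subset.refl _, ∅, by simp⟩
  have hinj : Set.InjOn (fun A => S ∪ A) ((Finset.Icc 1 n) \ S).powerset := by
    intro A hA B hB hAB
    simp only [mem_coe, mem_powerset] at hA hB
    have dA : Disjoint S A := Finset.disjoint_left.mpr fun x hx hxA =>
      (Finset.mem_sdiff.mp (hA hxA)).2 hx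
    have dB : Disjoint S B := Finset.disjoint_left.mpr fun x hx hxB =>
      (Finset.mem_sdiff.mp (hB hxB)).2 hx
    have hAB' : S ∪ A = S ∪ B := hAB
    have : (S ∪ A) \ S = (S ∪ B) \ S := by rw [hAB']
    rwa [Finset.union_sdiff_cancel_left dA, Finset.union_sdiff_cancel_left dB] at this
  have hc2 : (((Finset.Icc 1 n) \ S).powerset.image (fun A => S ∪ A)).card = 2 ^ (n - S.card) := by
    rw [Finset.card_image_of_injOn hinj, Finset.card_powerset, Finset.card_sdiff_of_subset hS, hcard]
  have hkey := Finset.card_union_add_card_inter (S.powerset)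
    (((Finset.Icc 1 n) \ S).powerset.image (fun A => S ∪ A))
  rw [h1, h2, hinter] at *
  rw [Finset.card_singleton] at hkey
  rw [Finset.card_powerset] at hkey
  omega
lemma two_pow_min_aux (a b : ℕ) (hab : a ≤ b) :
    2 ^ ((a + b + 1) / 2) + 2 ^ ((a + b) / 2) ≤ 2 ^ a + 2 ^ b := by
  have hxy : (2:ℕ) ^ a ≤ 2 ^ ((a + b + 1) / 2) := Nat.pow_le_pow_right (by norm_num) (by omega)
  set d := (a + b) / 2 - a with hdd
  set c := (a + b + 1) / 2 with hc
  set e := (a + b) / 2 with he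
  have hb : b = c + d := by omega
  have hea : e = a + d := by omega
  rw [hb, hea, pow_add, pow_add]
  have ht : 1 ≤ (2:ℕ) ^ d := Nat.one_le_two_pow
  nlinarith [Nat.mul_le_mul_right (2 ^ d - 1) hxy, Nat.sub_add_cancel ht]

lemma two_pow_min (a b : ℕ) :
    2 ^ ((a + b + 1) / 2) + 2 ^ ((a + b) / 2) ≤ 2 ^ a + 2 ^ b := by
  rcases le_total a b with h | h
  · exact two_pow_min_aux a b h
  · have := two_pow_min_aux b a h
    rw [show b + a = a + b by omega] at this
    omega

lemma two_pow_sum_le (a b : ℕ) : 2 ^ a + 2 ^ b ≤ 2 ^ (a + b) + 1 := by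
  rw [pow_add]
  have ha : 1 ≤ (2:ℕ) ^ a := Nat.one_le_two_pow
  have hb : 1 ≤ (2:ℕ) ^ b := Nat.one_le_two_pow
  nlinarith

open Finset in
lemma noncomp_count (n : ℕ) (S : Finset ℕ) (hS : S ⊆ Finset.Icc 1 n) :
    ((Finset.Icc 1 n).powerset.filter (fun T => ¬ (T ⊆ S ∨ S ⊆ T))).card
      = 2 ^ n + 1 - (2 ^ S.card + 2 ^ (n - S.card)) := by
  have hcard : (Finset.Icc 1 n).card = n := by simp
  have hSn : S.card ≤ n := hcard ▸ Finset.card_le_card hS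
  have htot := Finset.card_filter_add_card_filter_not
    (s := (Finset.Icc 1 n).powerset) (p := fun T => T ⊆ S ∨ S ⊆ T)
  rw [comparable_count n S hS, Finset.card_powerset, hcard] at htot
  have hle : 2 ^ S.card + 2 ^ (n - S.card) ≤ 2 ^ n + 1 := by
    have := two_pow_sum_le S.card (n - S.card)
    rwa [show S.card + (n - S.card) = n by omega] at this
  have h1 : 1 ≤ (2:ℕ) ^ S.card := Nat.one_le_two_pow
  have h2 : 1 ≤ (2:ℕ) ^ (n - S.card) := Nat.one_le_two_pow
  omega

/-- A pair of families `(𝓕, 𝓖)` is cross-Sperner if there is no pair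
`F ∈ 𝓕`, `G ∈ 𝓖` with `F ⊆ G` or `G ⊆ F`. -/
def CrossSperner (𝓕 𝓖 : Finset (Finset ℕ)) : Prop :=
  ∀ F ∈ 𝓕, ∀ G ∈ 𝓖, ¬ F ⊆ G ∧ ¬ G ⊆ F

theorem cross_sperner_F_n_1 (n : ℕ) :
    (∀ S : Finset ℕ, S ⊆ Finset.Icc 1 n →
      ((Finset.Icc 1 n).powerset.filter (fun T => T ≠ S ∧ (T ⊆ S ∨ S ⊆ T))).card =
        2 ^ S.card + 2 ^ (n - S.card) - 2) ∧
    (∀ S : Finset ℕ, S ⊆ Finset.Icc 1 n →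
      2 ^ ((n + 1) / 2) + 2 ^ (n / 2) - 2 ≤ 2 ^ S.card + 2 ^ (n - S.card) - 2) ∧
    (∀ S : Finset ℕ, S ⊆ Finset.Icc 1 n → S.card = (n + 1) / 2 →
      2 ^ S.card + 2 ^ (n - S.card) - 2 = 2 ^ ((n + 1) / 2) + 2 ^ (n / 2) - 2) ∧
    (∃ M : ℕ,
      IsGreatest {g : ℕ | ∃ 𝓖 𝓕 : Finset (Finset ℕ),
        𝓖 ⊆ (Finset.Icc 1 n).powerset ∧ 𝓕 ⊆ (Finset.Icc 1 n).powerset ∧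
        𝓕.card = 1 ∧ CrossSperner 𝓕 𝓖 ∧ 𝓖.card = g} M ∧
      (M : ℤ) = 2 ^ n - 2 ^ ((n + 1) / 2) - 2 ^ (n / 2) + 1) := by
  have hIcc : (Finset.Icc 1 n).card = n := by simp
  refine ⟨?_, ?_, ?_, ?_⟩
  · intro S hS
    have herase : (Finset.Icc 1 n).powerset.filter (fun T => T ≠ S ∧ (T ⊆ S ∨ S ⊆ T))
        = ((Finset.Icc 1 n).powerset.filter (fun T => T ⊆ S ∨ S ⊆ T)).erase S := by
      ext T
      simp only [Finset.mem_filter, Finset.mem_erase]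
      tauto
    have hSmem : S ∈ (Finset.Icc 1 n).powerset.filter (fun T => T ⊆ S ∨ S ⊆ T) := by
      simp [Finset.mem_powerset, hS]
    rw [herase, Finset.card_erase_of_mem hSmem, comparable_count n S hS]
    have h1 : 1 ≤ (2:ℕ) ^ S.card := Nat.one_le_two_pow
    have h2 : 1 ≤ (2:ℕ) ^ (n - S.card) := Nat.one_le_two_pow
    omega
  · intro S hS
    have hSn : S.card ≤ n := hIcc ▸ Finset.card_le_card hS
    have := two_pow_min S.card (n - S.card)
    rw [show S.card + (n - S.card) = n by omega] at this
    omega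
  · intro S hS hc
    have hSn : S.card ≤ n := hIcc ▸ Finset.card_le_card hS
    rw [hc, show n - (n + 1) / 2 = n / 2 by omega]
  · refine ⟨2 ^ n + 1 - (2 ^ ((n + 1) / 2) + 2 ^ (n / 2)), ⟨?_, ?_⟩, ?_⟩
    · -- membership: construct the extremal families
      obtain ⟨S₀, hS₀, hS₀c⟩ := Finset.exists_subset_card_eq (s := Finset.Icc 1 n) (n := (n + 1) / 2)
        (by omega)
      refine ⟨(Finset.Icc 1 n).powerset.filter (fun T => ¬ (T ⊆ S₀ ∨ S₀ ⊆ T)), {S₀},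
        Finset.filter_subset _ _, by simp [Finset.mem_powerset, hS₀],
        Finset.card_singleton S₀, ?_, ?_⟩
      · intro F hF G hG
        simp only [Finset.mem_singleton] at hF
        subst hF
        simp only [Finset.mem_filter] at hG
        tauto
      · rw [noncomp_count n S₀ hS₀, hS₀c, show n - (n + 1) / 2 = n / 2 by omega]
    · -- upper bound
      rintro g ⟨𝓖, 𝓕, h𝓖, h𝓕, hF1, hcs, rfl⟩
      obtain ⟨F, rfl⟩ := Finset.card_eq_one.mp hF1
      have hFsub : F ⊆ Finset.Icc 1 n := by
        have := h𝓕 (Finset.mem_singleton_self F)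
        rwa [Finset.mem_powerset] at this
      have hFn : F.card ≤ n := hIcc ▸ Finset.card_le_card hFsub
      have hsub : 𝓖 ⊆ (Finset.Icc 1 n).powerset.filter (fun T => ¬ (T ⊆ F ∨ F ⊆ T)) := by
        intro G hG
        have := hcs F (Finset.mem_singleton_self F) G hG
        simp only [Finset.mem_filter]
        exact ⟨h𝓖 hG, by tauto⟩
      have hle := Finset.card_le_card hsub
      rw [noncomp_count n F hFsub] at hle
      have hmin := two_pow_min F.card (n - F.card)
      rw [show F.card + (n - F.card) = n by omega] at hmin
      have hs1 : 2 ^ F.card + 2 ^ (n - F.card) ≤ 2 ^ n + 1 := by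
        have := two_pow_sum_le F.card (n - F.card)
        rwa [show F.card + (n - F.card) = n by omega] at this
      omega
    · -- value of M as an integer
      have hle : 2 ^ ((n + 1) / 2) + 2 ^ (n / 2) ≤ 2 ^ n + 1 := by
        have := two_pow_sum_le ((n + 1) / 2) (n / 2)
        rwa [show (n + 1) / 2 + n / 2 = n by omega] at this
      push_cast [Nat.cast_sub hle]
      ring
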